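/- For all positive integers m and n, the infinite alternating series sum over i >= 1 of (-1)^i / (L_{2m(i-1)+n} * L_{2m(i+1)+n}) converges to (1/(5 * F_n * F_{4m})) * (L_{2m}/L_{2m+n} - 2/L_n). -/

import Mathlib

def lucas : ℕ → ℕ
  | 0 => 2
  | 1 => 1
  | n + 2 => lucas (n + 1) + lucas n

open Real Filter

local notation "φ" => goldenRatio
local notation "ψ" => goldenConj

lemma lucas_pos : ∀ k, 0 < lucas k
  | 0 => by simp [lucas]
  | 1 => by simp [lucas]
  | (k + 2) => by
      have h := lucas_pos k
      have e : lucas (k + 2) = lucas (k + 1) + lucas k := rfl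
      omega

lemma lucas_le_succ (j : ℕ) : lucas (j + 1) ≤ lucas (j + 2) := by
  have e : lucas (j + 2) = lucas (j + 1) + lucas j := rfl
  omega

lemma lucas_add_le (j r : ℕ) : lucas (j + 1) ≤ lucas (j + 1 + r) := by
  induction r with
  | zero => exact le_refl _
  | succ r ih =>
      refine ih.trans ?_
      have h := lucas_le_succ (j + r)
      have e1 : j + 1 + r = j + r + 1 := by omega
      have e2 : j + 1 + (r + 1) = j + r + 2 := by omega
      rw [e1, e2]; exact h

lemma lucas_double (k m : ℕ) (hk : 1 ≤ k) (hm : 1 ≤ m) :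
    2 * lucas k ≤ lucas (k + 2 * m) := by
  obtain ⟨j, rfl⟩ : ∃ j, k = j + 1 := ⟨k - 1, by omega⟩
  have h1 : lucas (j + 3) ≤ lucas (j + 1 + 2 * m) := by
    have h := lucas_add_le (j + 2) (2 * m - 2)
    have e : j + 2 + 1 + (2 * m - 2) = j + 1 + 2 * m := by omega
    rw [e] at h
    exact h
  have h2 : 2 * lucas (j + 1) ≤ lucas (j + 3) := by
    have e : lucas (j + 3) = lucas (j + 2) + lucas (j + 1) := rfl
    have h := lucas_le_succ j
    omega
  omega

lemma lucas_real : ∀ k, (lucas k : ℝ) = φ ^ k + ψ ^ k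
  | 0 => by norm_num [lucas]
  | 1 => by simp [lucas, goldenRatio_add_goldenConj]
  | (k + 2) => by
      have h1 := lucas_real k
      have h2 := lucas_real (k + 1)
      have hφ : φ ^ (k + 2) = φ ^ (k + 1) + φ ^ k := by
        calc φ ^ (k + 2) = φ ^ k * φ ^ 2 := by ring
        _ = φ ^ k * (φ + 1) := by rw [goldenRatio_sq]
        _ = φ ^ (k + 1) + φ ^ k := by ring
      have hψ : ψ ^ (k + 2) = ψ ^ (k + 1) + ψ ^ k := by
        calc ψ ^ (k + 2) = ψ ^ k * ψ ^ 2 := by ring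
        _ = ψ ^ k * (ψ + 1) := by rw [goldenConj_sq]
        _ = ψ ^ (k + 1) + ψ ^ k := by ring
      have e : lucas (k + 2) = lucas (k + 1) + lucas k := rfl
      rw [e]
      push_cast
      rw [h1, h2, hφ, hψ]; ring

lemma absA (p q : ℝ) (k m : ℕ) (h : (p * q) ^ (2 * m) = 1) :
    (p ^ (k + 4 * m) + q ^ (k + 4 * m)) + (p ^ k + q ^ k)
      = (p ^ (2 * m) + q ^ (2 * m)) * (p ^ (k + 2 * m) + q ^ (k + 2 * m)) := by
  linear_combination (-(p ^ k) - q ^ k) * h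

lemma absB (p q s : ℝ) (m n : ℕ) (_hs : s ≠ 0) (h5 : s * s = 5) :
    (p ^ (2 * m) + q ^ (2 * m)) *
      (2 * (p ^ (2 * m + n) + q ^ (2 * m + n))
        - (p ^ (2 * m) + q ^ (2 * m)) * (p ^ n + q ^ n))
      = 5 * ((p ^ n - q ^ n) / s) * ((p ^ (4 * m) - q ^ (4 * m)) / s) := by
  field_simp
  linear_combination (p ^ n - q ^ n) * (p ^ (4 * m) - q ^ (4 * m)) * h5

lemma phi_psi_pow (m : ℕ) : (φ * ψ) ^ (2 * m) = 1 := by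
  rw [goldenRatio_mul_goldenConj, pow_mul]; norm_num

lemma lucas_addA (k m : ℕ) : (lucas (k + 4 * m) : ℝ) + lucas k
    = lucas (2 * m) * lucas (k + 2 * m) := by
  rw [lucas_real, lucas_real, lucas_real, lucas_real]
  exact absA _ _ k m (phi_psi_pow m)

lemma keyB (m n : ℕ) : (lucas (2 * m) : ℝ) *
    (2 * lucas (2 * m + n) - lucas (2 * m) * lucas n)
    = 5 * Nat.fib n * Nat.fib (4 * m) := by
  rw [lucas_real, lucas_real, lucas_real, Real.coe_fib_eq, Real.coe_fib_eq]
  have := absB φ ψ (√5) m n (by positivity) (Real.mul_self_sqrt (by norm_num))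
  linear_combination this

theorem stmt_15 (m n : ℕ) (hm : 0 < m) (hn : 0 < n) :
    HasSum (fun i : ℕ =>
      (-1 : ℝ) ^ (i + 1) /
        ((lucas (2 * m * i + n) : ℝ) * (lucas (2 * m * (i + 2) + n) : ℝ)))
      ((1 / (5 * (Nat.fib n : ℝ) * (Nat.fib (4 * m) : ℝ))) *
        ((lucas (2 * m) : ℝ) / (lucas (2 * m + n) : ℝ) - 2 / (lucas n : ℝ))) := by
  set a : ℕ → ℝ := fun i => (lucas (2 * m * i + n) : ℝ) with ha_def
  set f : ℕ → ℝ := fun i => (-1 : ℝ) ^ (i + 1) / (a i * a (i + 2)) with hf_def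
  have ha_pos : ∀ i, 0 < a i := fun i => by
    simp only [ha_def]; exact_mod_cast lucas_pos (2 * m * i + n)
  have ha1 : ∀ i, (1 : ℝ) ≤ a i := fun i => by
    simp only [ha_def]; exact_mod_cast lucas_pos (2 * m * i + n)
  have hgrow : ∀ i, 2 * a i ≤ a (i + 1) := by
    intro i
    have h := lucas_double (2 * m * i + n) m (by omega) hm
    have e : 2 * m * i + n + 2 * m = 2 * m * (i + 1) + n := by ring
    rw [e] at h
    simp only [ha_def]; exact_mod_cast h
  have hpow : ∀ i, (2 : ℝ) ^ i ≤ a i := by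
    intro i
    induction i with
    | zero => simpa using ha1 0
    | succ i ih =>
        calc (2 : ℝ) ^ (i + 1) = 2 * 2 ^ i := by ring
        _ ≤ 2 * a i := by linarith
        _ ≤ a (i + 1) := hgrow i
  have hnorm : ∀ i, ‖f i‖ ≤ (1 / 2 : ℝ) ^ i := by
    intro i
    have h1 : ‖f i‖ = 1 / (a i * a (i + 2)) := by
      rw [hf_def]
      rw [norm_div, norm_pow, norm_neg, norm_one, one_pow]
      rw [Real.norm_of_nonneg (le_of_lt (mul_pos (ha_pos i) (ha_pos (i + 2))))]
    rw [h1]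
    have h2 : (2 : ℝ) ^ i ≤ a i * a (i + 2) := by
      calc (2 : ℝ) ^ i ≤ a i := hpow i
      _ = a i * 1 := by ring
      _ ≤ a i * a (i + 2) := by
          exact mul_le_mul_of_nonneg_left (ha1 (i + 2)) (le_of_lt (ha_pos i))
    rw [div_pow, one_pow]
    exact one_div_le_one_div_of_le (by positivity) h2
  have hsum : Summable f :=
    Summable.of_norm_bounded (summable_geometric_of_lt_one (by norm_num) (by norm_num)) hnorm
  -- telescoping
  set L : ℝ := (lucas (2 * m) : ℝ) with hL_def
  have hL_pos : 0 < L := by simp only [hL_def]; exact_mod_cast lucas_pos (2 * m)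
  set u : ℕ → ℝ := fun i => (-1 : ℝ) ^ (i + 1) / (a i * a (i + 1)) with hu_def
  have key : ∀ i, f i = (u i - u (i + 1)) / L := by
    intro i
    have hA : a (i + 2) + a i = L * a (i + 1) := by
      have h := lucas_addA (2 * m * i + n) m
      have e1 : 2 * m * i + n + 4 * m = 2 * m * (i + 2) + n := by ring
      have e2 : 2 * m * i + n + 2 * m = 2 * m * (i + 1) + n := by ring
      rw [e1, e2] at h
      exact h
    have hp1 : (-1 : ℝ) ^ (i + 1) = -(-1 : ℝ) ^ i := by
      rw [pow_succ]; ring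
    have hp2 : (-1 : ℝ) ^ (i + 1 + 1) = (-1 : ℝ) ^ i := by
      rw [pow_succ, pow_succ]; ring
    rw [hf_def, hu_def]
    simp only [hp1, hp2]
    have h0 := (ha_pos i).ne'
    have h1 := (ha_pos (i + 1)).ne'
    have h2 := (ha_pos (i + 2)).ne'
    field_simp
    linear_combination hA
  have hps : ∀ N, ∑ i ∈ Finset.range N, f i = (u 0 - u N) / L := by
    intro N
    calc ∑ i ∈ Finset.range N, f i = ∑ i ∈ Finset.range N, (u i - u (i + 1)) / L := by
          exact Finset.sum_congr rfl fun i _ => key i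
    _ = (∑ i ∈ Finset.range N, (u i - u (i + 1))) / L := by rw [Finset.sum_div]
    _ = (u 0 - u N) / L := by rw [Finset.sum_range_sub' u N]
  have hu0 : Tendsto u atTop (nhds 0) := by
    refine squeeze_zero_norm (a := fun i => (1 / 2 : ℝ) ^ i) ?_ ?_
    · intro i
      have h1 : ‖u i‖ = 1 / (a i * a (i + 1)) := by
        rw [hu_def]
        rw [norm_div, norm_pow, norm_neg, norm_one, one_pow]
        rw [Real.norm_of_nonneg (le_of_lt (mul_pos (ha_pos i) (ha_pos (i + 1))))]
      rw [h1]
      show 1 / (a i * a (i + 1)) ≤ (1 / 2 : ℝ) ^ i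
      have h2 : (2 : ℝ) ^ i ≤ a i * a (i + 1) := by
        calc (2 : ℝ) ^ i ≤ a i := hpow i
        _ = a i * 1 := by ring
        _ ≤ a i * a (i + 1) := by
            exact mul_le_mul_of_nonneg_left (ha1 (i + 1)) (le_of_lt (ha_pos i))
      rw [div_pow, one_pow]
      exact one_div_le_one_div_of_le (by positivity) h2
    · exact tendsto_pow_atTop_nhds_zero_of_lt_one (by norm_num) (by norm_num)
  have htend : Tendsto (fun N => ∑ i ∈ Finset.range N, f i) atTop (nhds (u 0 / L)) := by
    simp only [hps]
    have h2 : Tendsto (fun N => (u 0 - u N) / L) atTop (nhds ((u 0 - 0) / L)) :=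
      (tendsto_const_nhds.sub hu0).div_const L
    simpa using h2
  -- value identification
  have hfib_n : (0 : ℝ) < (Nat.fib n : ℝ) := by exact_mod_cast Nat.fib_pos.mpr hn
  have hfib_4m : (0 : ℝ) < (Nat.fib (4 * m) : ℝ) := by
    exact_mod_cast Nat.fib_pos.mpr (by omega)
  have hln : (0 : ℝ) < (lucas n : ℝ) := by exact_mod_cast lucas_pos n
  have hlmn : (0 : ℝ) < (lucas (2 * m + n) : ℝ) := by exact_mod_cast lucas_pos (2 * m + n)
  have hval : (1 / (5 * (Nat.fib n : ℝ) * (Nat.fib (4 * m) : ℝ))) *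
      ((lucas (2 * m) : ℝ) / (lucas (2 * m + n) : ℝ) - 2 / (lucas n : ℝ)) = u 0 / L := by
    have hB := keyB m n
    have ha0 : a 0 = (lucas n : ℝ) := by rw [ha_def]; norm_num
    have ha1' : a 1 = (lucas (2 * m + n) : ℝ) := by
      rw [ha_def]
      norm_num
    have hu0v : u 0 = -1 / ((lucas n : ℝ) * (lucas (2 * m + n) : ℝ)) := by
      rw [hu_def]
      simp only [pow_one]
      rw [ha0, ha1']
      norm_num
    rw [hu0v, hL_def]
    have h5 : (0:ℝ) < 5 * (Nat.fib n : ℝ) * (Nat.fib (4 * m) : ℝ) := by positivity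
    have hLne : (lucas (2 * m) : ℝ) ≠ 0 := hL_pos.ne'
    field_simp
    linear_combination (-1 : ℝ) * hB
  rw [hval]
  rw [hasSum_iff_tendsto_nat_of_summable_norm]
  · exact htend
  · exact Summable.of_nonneg_of_le (fun i => norm_nonneg _) hnorm
      (summable_geometric_of_lt_one (by norm_num) (by norm_num))
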